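/- Let n ≥ 2 and let A^{(j)}_x (j ∈ {1,…,n}, x ∈ {0,1}) be 2×2 Hermitian matrices with (A^{(j)}_x)² ≤ I_2 in the Loewner order for all j, x. Then for every s ∈ {0,1}^n, (n−1) P_{1,s}² + Σ_{j=2}^n P_{j,s}² ≤ 2(n−1)·I_{2^n} in the Loewner order. -/

import Mathlib

open Matrix Finset ComplexOrder

noncomputable section

/-- 2×2 complex matrices. -/
abbrev Mat2 := Matrix (Fin 2) (Fin 2) ℂ

/-- Tensor product of `n` 2×2 matrices, indexed by bit strings `Fin n → Fin 2`. -/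
def tensorN (n : ℕ) (M : Fin n → Mat2) :
    Matrix (Fin n → Fin 2) (Fin n → Fin 2) ℂ :=
  Matrix.of fun f g => ∏ j, M j (f j) (g j)

/-- The operators `P_{j,s}`. -/
def Pop (n : ℕ) [NeZero n] (A : Fin n → Fin 2 → Mat2) (s : Fin n → Fin 2) (j : Fin n) :
    Matrix (Fin n → Fin 2) (Fin n → Fin 2) ℂ :=
  if j = 0 then
    ((-1 : ℂ) ^ ((s 0 : ℕ)) * ((Real.sqrt 2 : ℂ))⁻¹) •
      tensorN n (fun k => if k = 0 then A 0 0 + A 0 1 else A k 0)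
  else
    ((-1 : ℂ) ^ ((s j : ℕ)) * ((Real.sqrt 2 : ℂ))⁻¹) •
      tensorN n (fun k => if k = 0 then A 0 0 - A 0 1 else if k = j then A j 1 else 1)

/- ### Auxiliary lemmas -/

lemma tensorN_mul (n : ℕ) (M N : Fin n → Mat2) :
    tensorN n M * tensorN n N = tensorN n (fun j => M j * N j) := by
  ext f h
  simp only [tensorN, of_apply, Matrix.mul_apply]
  calc ∑ g : Fin n → Fin 2, (∏ j, M j (f j) (g j)) * ∏ j, N j (g j) (h j)
      = ∑ g : Fin n → Fin 2, ∏ j, (M j (f j) (g j) * N j (g j) (h j)) := by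
        simp [Finset.prod_mul_distrib]
    _ = ∏ j, ∑ x : Fin 2, M j (f j) x * N j x (h j) :=
        (Fintype.prod_sum (fun j x => M j (f j) x * N j x (h j))).symm

lemma tensorN_conjTranspose (n : ℕ) (M : Fin n → Mat2) :
    (tensorN n M)ᴴ = tensorN n (fun j => (M j)ᴴ) := by
  ext f g
  simp [tensorN, conjTranspose_apply, map_prod]

lemma tensorN_posSemidef (n : ℕ) (M : Fin n → Mat2) (h : ∀ j, (M j).PosSemidef) :
    (tensorN n M).PosSemidef := by
  choose B hB using fun j => by
    open scoped MatrixOrder Matrix.Norms.L2Operator in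
    exact CStarAlgebra.nonneg_iff_eq_star_mul_self.mp (h j).nonneg
  have : tensorN n M = (tensorN n B)ᴴ * tensorN n B := by
    rw [tensorN_conjTranspose, tensorN_mul]
    exact congrArg _ (funext fun j => hB j)
  rw [this]
  exact Matrix.posSemidef_conjTranspose_mul_self _

lemma prod_update_entry (n : ℕ) (M : Fin n → Mat2) (j0 : Fin n) (X : Mat2)
    (f g : Fin n → Fin 2) :
    ∏ k, (Function.update M j0 X) k (f k) (g k)
      = X (f j0) (g j0) * ∏ k ∈ univ.erase j0, M k (f k) (g k) := by
  rw [← Finset.mul_prod_erase univ _ (mem_univ j0), Function.update_self]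
  congr 1
  exact Finset.prod_congr rfl fun k hk => by
    rw [Function.update_of_ne (Finset.mem_erase.mp hk).1]

lemma tensorN_update_add (n : ℕ) (M : Fin n → Mat2) (j0 : Fin n) (X Y : Mat2) :
    tensorN n (Function.update M j0 (X + Y))
      = tensorN n (Function.update M j0 X) + tensorN n (Function.update M j0 Y) := by
  ext f g
  simp only [tensorN, of_apply, Matrix.add_apply, prod_update_entry]
  ring

lemma tensorN_update_smul (n : ℕ) (M : Fin n → Mat2) (j0 : Fin n) (c : ℂ) (X : Mat2) :
    tensorN n (Function.update M j0 (c • X))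
      = c • tensorN n (Function.update M j0 X) := by
  ext f g
  simp only [tensorN, of_apply, Matrix.smul_apply, prod_update_entry, smul_eq_mul]
  ring

lemma tensorN_one (n : ℕ) : tensorN n (fun _ => (1 : Mat2)) = 1 := by
  ext f g
  simp only [tensorN, of_apply, Matrix.one_apply]
  by_cases h : f = g
  · subst h; simp
  · rw [if_neg h]
    obtain ⟨j, hj⟩ := Function.ne_iff.mp h
    exact Finset.prod_eq_zero (mem_univ j) (by simp [hj])

lemma psd_smul_real {m : Type*} [Fintype m] {M : Matrix m m ℂ} (hM : M.PosSemidef)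
    {c : ℝ} (hc : 0 ≤ c) : (((c : ℂ)) • M).PosSemidef := by
  refine .of_dotProduct_mulVec_nonneg ?_ ?_
  · show (((c : ℂ)) • M)ᴴ = _
    rw [conjTranspose_smul, hM.1.eq]
    congr 1
    simp [RCLike.star_def, Complex.conj_ofReal]
  · intro x
    rw [smul_mulVec, dotProduct_smul, smul_eq_mul]
    exact mul_nonneg (Complex.zero_le_real.mpr hc) (hM.dotProduct_mulVec_nonneg x)

lemma tensorN_sub_posSemidef (n : ℕ) (M N : Fin n → Mat2)
    (hM : ∀ k, (M k).PosSemidef) (hN : ∀ k, (N k).PosSemidef)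
    (hd : ∀ k, (N k - M k).PosSemidef) :
    (tensorN n N - tensorN n M).PosSemidef := by
  have key : ∀ t : Finset (Fin n),
      (tensorN n (fun k => if k ∈ t then N k else M k) - tensorN n M).PosSemidef := by
    intro t
    induction t using Finset.induction_on with
    | empty =>
        have : (fun k => if k ∈ (∅ : Finset (Fin n)) then N k else M k) = M := by
          funext k; simp
        rw [this, sub_self]
        exact Matrix.PosSemidef.zero
    | @insert a t ha ih =>
        set F : Fin n → Mat2 := fun k => if k ∈ t then N k else M k with hF
        have h1 : (fun k => if k ∈ insert a t then N k else M k)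
            = Function.update F a (N a) := by
          funext k
          by_cases hk : k = a
          · subst hk; simp [F, ha, Function.update_self]
          · simp [Function.update_of_ne hk, F, hk]
        have h2 : Function.update F a (N a)
            = Function.update F a (M a + (N a - M a)) := by
          rw [add_sub_cancel]
        have h3 : Function.update F a (M a) = F := by
          funext k
          by_cases hk : k = a
          · subst hk; simp [F, ha]
          · rw [Function.update_of_ne hk]
        have h4 : tensorN n (fun k => if k ∈ insert a t then N k else M k)
            = tensorN n F + tensorN n (Function.update F a (N a - M a)) := by
          rw [h1, h2, tensorN_update_add, h3]
        rw [h4]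
        have hpsd : (tensorN n (Function.update F a (N a - M a))).PosSemidef := by
          apply tensorN_posSemidef
          intro k
          by_cases hk : k = a
          · subst hk; simpa using hd k
          · rw [Function.update_of_ne hk]
            by_cases hkt : k ∈ t
            · simpa [F, hkt] using hN k
            · simpa [F, hkt] using hM k
        have := ih.add hpsd
        convert this using 1
        abel
  have := key Finset.univ
  simpa using this

lemma sq_psd {a : Mat2} (h : a.IsHermitian) : (a * a).PosSemidef := by
  nth_rewrite 1 [← h.eq]
  exact Matrix.posSemidef_conjTranspose_mul_self a

lemma coeff_sq (k : ℕ) :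
    ((-1 : ℂ) ^ k * ((Real.sqrt 2 : ℂ))⁻¹) ^ 2 = (2 : ℂ)⁻¹ := by
  rw [mul_pow, ← pow_mul, mul_comm k 2, pow_mul]
  have h2 : ((Real.sqrt 2 : ℂ)) ^ 2 = 2 := by
    rw [← Complex.ofReal_pow, Real.sq_sqrt (by norm_num)]
    norm_num
  rw [inv_pow, h2]
  norm_num

/-- if every `A^{(j)}_x` is Hermitian with `(A^{(j)}_x)² ≤ I`, then
`(n-1) P_{1,s}² + Σ_{j=2}^n P_{j,s}² ≤ 2(n-1)·I` in the Loewner order. -/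
theorem stmt3 (n : ℕ) [NeZero n] (hn : 2 ≤ n)
    (A : Fin n → Fin 2 → Mat2)
    (hherm : ∀ j x, (A j x).IsHermitian)
    (hsq : ∀ j x, ((1 : Mat2) - A j x * A j x).PosSemidef)
    (s : Fin n → Fin 2) :
    (((2 * ((n : ℝ) - 1) : ℝ) : ℂ) •
        (1 : Matrix (Fin n → Fin 2) (Fin n → Fin 2) ℂ)
      - ((((n : ℂ) - 1)) • (Pop n A s 0) ^ 2
          + ∑ j ∈ Finset.univ.filter (fun j : Fin n => j ≠ 0),
              (Pop n A s j) ^ 2)).PosSemidef := by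
  set a := A 0 0 with ha
  set b := A 0 1 with hb
  set Cm : Mat2 := (2 : ℂ)⁻¹ • ((a + b) * (a + b)) with hCmdef
  set Dm : Mat2 := (2 : ℂ)⁻¹ • ((a - b) * (a - b)) with hDmdef
  set M1 : Fin n → Mat2 := Function.update (fun k => A k 0 * A k 0) 0 Cm with hM1def
  set MJ : Fin n → Fin n → Mat2 := fun j =>
    Function.update (Function.update (fun _ => (1 : Mat2)) j (A j 1 * A j 1)) 0 Dm with hMJdef
  set N1 : Fin n → Mat2 := Function.update (fun _ => (1 : Mat2)) 0 Cm with hN1def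
  set ND : Fin n → Mat2 := Function.update (fun _ => (1 : Mat2)) 0 Dm with hNDdef
  set E0 : Fin n → Mat2 :=
    Function.update (fun _ => (1 : Mat2)) 0 ((2 : ℂ) • 1 - Cm - Dm) with hE0def
  -- squares of the operators
  have hP0 : (Pop n A s 0) ^ 2 = tensorN n M1 := by
    rw [Pop, if_pos rfl, smul_pow, coeff_sq, pow_two, tensorN_mul]
    have : (fun k => (if k = 0 then A 0 0 + A 0 1 else A k 0) *
        (if k = 0 then A 0 0 + A 0 1 else A k 0))
        = Function.update (fun k => A k 0 * A k 0) 0 ((a + b) * (a + b)) := by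
      funext k
      by_cases hk : k = 0
      · subst hk; simp [Function.update_self, ha, hb]
      · simp [hk, Function.update_of_ne hk]
    rw [this, ← tensorN_update_smul]
  have hPj : ∀ j : Fin n, j ≠ 0 → (Pop n A s j) ^ 2 = tensorN n (MJ j) := by
    intro j hj
    rw [Pop, if_neg hj, smul_pow, coeff_sq, pow_two, tensorN_mul]
    have : (fun k => (if k = 0 then A 0 0 - A 0 1 else if k = j then A j 1 else 1) *
        (if k = 0 then A 0 0 - A 0 1 else if k = j then A j 1 else 1))
        = Function.update (Function.update (fun _ => (1 : Mat2)) j (A j 1 * A j 1)) 0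
            ((a - b) * (a - b)) := by
      funext k
      by_cases hk : k = 0
      · subst hk
        simp [Function.update_self, ha, hb, (Ne.symm hj)]
      · rw [Function.update_of_ne hk]
        by_cases hkj : k = j
        · subst hkj; simp [hk, Function.update_self]
        · simp [hk, hkj, Function.update_of_ne hkj]
    rw [this, ← tensorN_update_smul]
  -- positivity of building blocks
  have hhalf : ((2 : ℂ))⁻¹ = (((2 : ℝ)⁻¹ : ℝ) : ℂ) := by push_cast; ring
  have hCm : Cm.PosSemidef := by
    rw [hCmdef, hhalf]
    exact psd_smul_real (sq_psd ((hherm 0 0).add (hherm 0 1))) (by norm_num)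
  have hDm : Dm.PosSemidef := by
    rw [hDmdef, hhalf]
    exact psd_smul_real (sq_psd ((hherm 0 0).sub (hherm 0 1))) (by norm_num)
  have hsum : Cm + Dm = a * a + b * b := by
    rw [hCmdef, hDmdef, ← smul_add]
    have expand : (a + b) * (a + b) + (a - b) * (a - b)
        = (a * a + a * a) + (b * b + b * b) := by noncomm_ring
    rw [expand]
    module
  have hE : ((2 : ℂ) • (1 : Mat2) - Cm - Dm).PosSemidef := by
    have : (2 : ℂ) • (1 : Mat2) - Cm - Dm = (1 - a * a) + (1 - b * b) := by
      rw [sub_sub, hsum, two_smul]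
      abel
    rw [this]
    exact (hsq 0 0).add (hsq 0 1)
  -- PSD of the three pieces
  have hT0 : (tensorN n E0).PosSemidef := by
    apply tensorN_posSemidef
    intro k
    by_cases hk : k = 0
    · subst hk; simpa [E0] using hE
    · simpa [E0, Function.update_of_ne hk] using Matrix.PosSemidef.one
  have hT1 : (tensorN n N1 - tensorN n M1).PosSemidef := by
    apply tensorN_sub_posSemidef
    · intro k
      by_cases hk : k = 0
      · subst hk; simpa [M1] using hCm
      · simpa [M1, Function.update_of_ne hk] using sq_psd (hherm k 0)
    · intro k
      by_cases hk : k = 0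
      · subst hk; simpa [N1] using hCm
      · simpa [N1, Function.update_of_ne hk] using Matrix.PosSemidef.one
    · intro k
      by_cases hk : k = 0
      · subst hk; simp [N1, M1]; exact Matrix.PosSemidef.zero
      · simpa [N1, M1, Function.update_of_ne hk] using hsq k 0
  have hT2 : ∀ j : Fin n, j ≠ 0 → (tensorN n ND - tensorN n (MJ j)).PosSemidef := by
    intro j hj
    apply tensorN_sub_posSemidef
    · intro k
      by_cases hk : k = 0
      · subst hk; simpa [MJ] using hDm
      · rw [hMJdef]
        simp only [Function.update_of_ne hk]
        by_cases hkj : k = j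
        · subst hkj; simpa using sq_psd (hherm k 1)
        · simpa [Function.update_of_ne hkj] using Matrix.PosSemidef.one
    · intro k
      by_cases hk : k = 0
      · subst hk; simpa [ND] using hDm
      · simpa [ND, Function.update_of_ne hk] using Matrix.PosSemidef.one
    · intro k
      by_cases hk : k = 0
      · subst hk; simp [ND, MJ]; exact Matrix.PosSemidef.zero
      · rw [hNDdef, hMJdef]
        simp only [Function.update_of_ne hk]
        by_cases hkj : k = j
        · subst hkj; simpa [Function.update_self] using hsq k 1
        · simp [Function.update_of_ne hkj]
          exact Matrix.PosSemidef.zero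
  -- the key algebraic identity at slot 0
  have hkey : tensorN n E0 + tensorN n N1 + tensorN n ND
      = (2 : ℂ) • (1 : Matrix (Fin n → Fin 2) (Fin n → Fin 2) ℂ) := by
    rw [hE0def, hN1def, hNDdef, ← tensorN_update_add, ← tensorN_update_add]
    have : ((2 : ℂ) • (1 : Mat2) - Cm - Dm) + Cm + Dm = (2 : ℂ) • 1 := by abel
    rw [this, tensorN_update_smul]
    congr 1
    rw [show Function.update (fun _ : Fin n => (1 : Mat2)) 0 1
        = fun _ : Fin n => (1 : Mat2) from Function.update_eq_self 0 _]
    exact tensorN_one n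
  -- cardinality of the index set
  have hcard : (Finset.univ.filter (fun j : Fin n => j ≠ 0)).card = n - 1 := by
    rw [Finset.filter_ne', Finset.card_erase_of_mem (mem_univ 0), Finset.card_univ,
      Fintype.card_fin]
  have hone : 1 ≤ n := le_trans (by norm_num) hn
  have hcast : (((n - 1 : ℕ)) : ℂ) = (n : ℂ) - 1 := by
    rw [Nat.cast_sub hone, Nat.cast_one]
  have hsumND : ∑ _j ∈ Finset.univ.filter (fun j : Fin n => j ≠ 0), tensorN n ND
      = ((n : ℂ) - 1) • tensorN n ND := by
    rw [Finset.sum_const, hcard, ← hcast, Nat.cast_smul_eq_nsmul]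
  -- rewrite the sum of squares
  have hrw : ∑ j ∈ Finset.univ.filter (fun j : Fin n => j ≠ 0), (Pop n A s j) ^ 2
      = ∑ j ∈ Finset.univ.filter (fun j : Fin n => j ≠ 0), tensorN n (MJ j) :=
    Finset.sum_congr rfl (fun j hj => hPj j (Finset.mem_filter.mp hj).2)
  have hbig : (((2 * ((n : ℝ) - 1) : ℝ) : ℂ)) = 2 * (n : ℂ) - 2 := by push_cast; ring
  -- main decomposition
  have hmain : (((2 * ((n : ℝ) - 1) : ℝ) : ℂ) •
        (1 : Matrix (Fin n → Fin 2) (Fin n → Fin 2) ℂ)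
      - ((((n : ℂ) - 1)) • (Pop n A s 0) ^ 2
          + ∑ j ∈ Finset.univ.filter (fun j : Fin n => j ≠ 0), (Pop n A s j) ^ 2))
      = ((n : ℂ) - 1) • tensorN n E0
        + (((n : ℂ) - 1) • (tensorN n N1 - tensorN n M1)
          + ∑ j ∈ Finset.univ.filter (fun j : Fin n => j ≠ 0),
              (tensorN n ND - tensorN n (MJ j))) := by
    rw [hP0, hrw, Finset.sum_sub_distrib, hsumND, hbig]
    have hE0eq : tensorN n E0 = (2 : ℂ) • 1 - tensorN n N1 - tensorN n ND := by
      rw [← hkey]; abel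
    rw [hE0eq]
    module
  rw [hmain]
  have hnn : ((n : ℂ) - 1) = (((n : ℝ) - 1 : ℝ) : ℂ) := by push_cast; ring
  have hnpos : (0 : ℝ) ≤ (n : ℝ) - 1 := by
    have : (2 : ℝ) ≤ (n : ℝ) := by exact_mod_cast hn
    linarith
  refine Matrix.PosSemidef.add ?_ (Matrix.PosSemidef.add ?_ ?_)
  · rw [hnn]; exact psd_smul_real hT0 hnpos
  · rw [hnn]; exact psd_smul_real hT1 hnpos
  · exact Finset.sum_induction _ _ (fun _ _ hx hy => hx.add hy) Matrix.PosSemidef.zero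
      (fun j hj => hT2 j (Finset.mem_filter.mp hj).2)
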